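/- arXiv:2310.18736 — 3 statements merged into one kernel-verified Lean document; each statement's English description precedes it below -/
import Mathlib

section
/- A preference profile satisfies MaxRou if and only if (1) it satisfies MaxProp with a woman w_n who is every man's least preferred woman, and (2) every woman other than w_n is the top preference of at least one man. -/
open scoped Classical

noncomputable section

/-- A two-sided matching market with `n` men and `n` women, each with a complete
strict preference order over the other side. `mpref m k` is man `m`'s `k`-th
favourite woman (0 = top), and `wpref w k` is woman `w`'s `k`-th favourite man. -/
structure Profile (n : ℕ) where
  mpref : Fin n → (Fin n ≃ Fin n)
  wpref : Fin n → (Fin n ≃ Fin n)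

namespace Profile

variable {n : ℕ}

/-- rank (0 = best) of woman `w` in man `m`'s preference list -/
def mrank (P : Profile n) (m w : Fin n) : ℕ := ((P.mpref m).symm w : ℕ)

/-- rank (0 = best) of man `m` in woman `w`'s preference list -/
def wrank (P : Profile n) (w m : Fin n) : ℕ := ((P.wpref w).symm m : ℕ)

/-- man `m` strictly prefers woman `w` to woman `w'` -/
def mPrefers (P : Profile n) (m w w' : Fin n) : Prop := P.mrank m w < P.mrank m w'

/-- woman `w` strictly prefers man `m` to man `m'` -/
def wPrefers (P : Profile n) (w m m' : Fin n) : Prop := P.wrank w m < P.wrank w m'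

/-- top choice of man `m` -/
def topM (P : Profile n) (m : Fin n) : Fin n := P.mpref m ⟨0, m.pos⟩

/-- top choice of woman `w` -/
def topW (P : Profile n) (w : Fin n) : Fin n := P.wpref w ⟨0, w.pos⟩

/-- the profile with the roles of men and women exchanged -/
def swap (P : Profile n) : Profile n := ⟨P.wpref, P.mpref⟩

/-- State of the men-proposing deferred acceptance algorithm:
`next m` = number of proposals man `m` has made so far,
`held w` = the man woman `w` currently tentatively holds (if any). -/
structure DAState (n : ℕ) where
  next : Fin n → ℕ
  held : Fin n → Option (Fin n)

def initState (n : ℕ) : DAState n := ⟨fun _ => 0, fun _ => none⟩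

/-- the men currently unmatched (held by no woman) -/
def unmatched (s : DAState n) : Finset (Fin n) :=
  Finset.univ.filter fun m => ∀ w : Fin n, s.held w ≠ some m

/-- the woman man `m` proposes to next: his most preferred woman among those
who have not rejected him yet -/
def target (P : Profile n) (s : DAState n) (m : Fin n) : Fin n :=
  P.mpref m ⟨s.next m % n, Nat.mod_lt _ m.pos⟩

/-- the men proposing to woman `w` in the current round -/
def proposers (P : Profile n) (s : DAState n) (w : Fin n) : Finset (Fin n) :=
  (unmatched s).filter fun m => target P s m = w

/-- one round of the men-proposing deferred acceptance algorithm: every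
unmatched man proposes to his favourite woman who has not rejected him yet,
and every woman tentatively holds her favourite among her current partner
and the new proposers, rejecting the rest -/
def step (P : Profile n) (s : DAState n) : DAState n where
  next := fun m => if m ∈ unmatched s then s.next m + 1 else s.next m
  held := fun w => ((proposers P s w ∪ (s.held w).toFinset).toList).argmin (P.wrank w)

/-- the state after `k` rounds of men-proposing deferred acceptance -/
def stateAt (P : Profile n) (k : ℕ) : DAState n := (step P)^[k] (initState n)

/-- the final state of men-proposing deferred acceptance
(`n * n + 1` iterations is always enough to reach the fixed point) -/
def finalState (P : Profile n) : DAState n := stateAt P (n * n + 1)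

/-- total number of proposals made during the men-proposing DA -/
def totalProposals (P : Profile n) : ℕ := ∑ m : Fin n, (finalState P).next m

/-- number of rounds of the men-proposing DA (rounds in which some proposal is made) -/
def rounds (P : Profile n) : ℕ :=
  ((Finset.range (n * n + 1)).filter fun k => (unmatched (stateAt P k)).Nonempty).card

/-- total number of proposals received by woman `w` during the men-proposing DA -/
def proposalsTo (P : Profile n) (w : Fin n) : ℕ :=
  ∑ k ∈ Finset.range (n * n + 1), (proposers P (stateAt P k) w).card

/-- man `m` proposes to woman `w` at some point during the men-proposing DA -/
def proposedTo (P : Profile n) (m w : Fin n) : Prop :=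
  ∃ k < n * n + 1, m ∈ proposers P (stateAt P k) w

/-- the men-proposing DA makes the maximum possible number `n² - n + 1` of proposals -/
def MaxProp (P : Profile n) : Prop := P.totalProposals = n * n + 1 - n

/-- the men-proposing DA takes the maximum possible number `n² - 2n + 2` of rounds -/
def MaxRou (P : Profile n) : Prop := P.rounds = n * n + 2 - 2 * n

/-- a matching (a bijection man ↦ woman) is stable iff no man-woman pair mutually
prefer each other to their assigned partners -/
def Stable (P : Profile n) (μ : Fin n ≃ Fin n) : Prop :=
  ¬ ∃ (m w : Fin n), P.mPrefers m w (μ m) ∧ P.wPrefers w m (μ.symm w)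

/-- the profile admits a unique stable matching -/
def USM (P : Profile n) : Prop := ∃! μ : Fin n ≃ Fin n, P.Stable μ

/-- the sequential preference condition of Eeckhout (2000) -/
def SPC (P : Profile n) : Prop :=
  ∃ σ τ : Equiv.Perm (Fin n), ∀ i j : Fin n, i < j →
    P.mPrefers (σ i) (τ i) (τ j) ∧ P.wPrefers (τ i) (σ i) (σ j)

/-- the no crossing condition of Clark (2006) -/
def NCC (P : Profile n) : Prop :=
  ∃ σ τ : Equiv.Perm (Fin n), ∀ i j k l : Fin n, i < j → k < l →
    (P.mPrefers (σ i) (τ l) (τ k) → P.mPrefers (σ j) (τ l) (τ k)) ∧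
    (P.wPrefers (τ k) (σ j) (σ i) → P.wPrefers (τ l) (σ j) (σ i))

end Profile

namespace Profile

variable {n : ℕ} (P : Profile n)

lemma mem_unmatched {s : DAState n} {m : Fin n} :
    m ∈ unmatched s ↔ ∀ w, s.held w ≠ some m := by
  simp [unmatched]

lemma step_next (s : DAState n) (m : Fin n) :
    (step P s).next m = if m ∈ unmatched s then s.next m + 1 else s.next m := rfl

lemma mem_proposers {s : DAState n} {m w : Fin n} :
    m ∈ proposers P s w ↔ m ∈ unmatched s ∧ target P s m = w := by
  simp [proposers]

lemma held_step_mem {s : DAState n} {w m : Fin n}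
    (h : (step P s).held w = some m) : m ∈ proposers P s w ∨ s.held w = some m := by
  have hm : m ∈ (proposers P s w ∪ (s.held w).toFinset).toList :=
    List.argmin_mem h
  rw [Finset.mem_toList, Finset.mem_union] at hm
  rcases hm with h1 | h2
  · exact Or.inl h1
  · right
    rwa [Option.mem_toFinset, Option.mem_def] at h2

lemma held_step_isSome {s : DAState n} {w : Fin n}
    (h : (proposers P s w).Nonempty ∨ (∃ m, s.held w = some m)) :
    ∃ m, (step P s).held w = some m := by
  have hne : (proposers P s w ∪ (s.held w).toFinset).Nonempty := by
    rcases h with h | ⟨m, hm⟩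
    · exact h.mono Finset.subset_union_left
    · exact ⟨m, Finset.mem_union.2 (Or.inr (by simp [hm]))⟩
  have hnil : (proposers P s w ∪ (s.held w).toFinset).toList ≠ [] :=
    fun hl => hne.ne_empty (Finset.toList_eq_nil.1 hl)
  rcases hh : ((proposers P s w ∪ (s.held w).toFinset).toList).argmin (P.wrank w) with _ | m
  · exact absurd (List.argmin_eq_none.1 hh) hnil
  · exact ⟨m, hh⟩

/-- Invariants maintained by the DA algorithm: held is injective, and every
woman a man has proposed to holds somebody. -/
def Inv (s : DAState n) : Prop :=
  (∀ w w' m, s.held w = some m → s.held w' = some m → w = w') ∧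
  (∀ m w, P.mrank m w < s.next m → ∃ m', s.held w = some m')

lemma next_lt_of_unmatched {s : DAState n} (hI : Inv P s) {m : Fin n}
    (hm : m ∈ unmatched s) : s.next m < n := by
  by_contra hn
  push_neg at hn
  have hall : ∀ w : Fin n, ∃ m', s.held w = some m' := fun w =>
    hI.2 m w (lt_of_lt_of_le ((P.mpref m).symm w).isLt hn)
  set f : Fin n → Fin n := fun w => (hall w).choose with hf
  have hspec : ∀ w, s.held w = some (f w) := fun w => (hall w).choose_spec
  have hinj : Function.Injective f := fun w w' hww =>
    hI.1 w w' (f w) (hspec w) (hww ▸ hspec w')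
  obtain ⟨w, hw⟩ := Finite.surjective_of_injective hinj m
  exact (mem_unmatched.1 hm) w (hw ▸ hspec w)

lemma target_eq {s : DAState n} {m : Fin n} (h : s.next m < n) :
    target P s m = P.mpref m ⟨s.next m, h⟩ :=
  congrArg (P.mpref m) (Fin.ext (Nat.mod_eq_of_lt h))

lemma inv_step {s : DAState n} (hI : Inv P s) : Inv P (step P s) := by
  constructor
  · intro w w' m hw hw'
    rcases held_step_mem P hw with h1 | h1 <;> rcases held_step_mem P hw' with h2 | h2
    · rw [mem_proposers] at h1 h2
      rw [← h1.2, ← h2.2]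
    · exact absurd h2 (mem_unmatched.1 ((mem_proposers P).1 h1).1 w')
    · exact absurd h1 (mem_unmatched.1 ((mem_proposers P).1 h2).1 w)
    · exact hI.1 w w' m h1 h2
  · intro m w hrank
    rw [step_next] at hrank
    by_cases hm : m ∈ unmatched s
    · rw [if_pos hm] at hrank
      have hlt := next_lt_of_unmatched P hI hm
      rcases Nat.lt_succ_iff_lt_or_eq.1 hrank with h | h
      · exact held_step_isSome P (Or.inr (hI.2 m w h))
      · -- w is the target of m
        have hw : target P s m = w := by
          rw [target_eq P hlt]
          have : (P.mpref m).symm w = ⟨s.next m, hlt⟩ := Fin.ext h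
          rw [← this, Equiv.apply_symm_apply]
        exact held_step_isSome P (Or.inl ⟨m, (mem_proposers P).2 ⟨hm, hw⟩⟩)
    · rw [if_neg hm] at hrank
      exact held_step_isSome P (Or.inr (hI.2 m w hrank))

lemma inv_stateAt (k : ℕ) : Inv P (stateAt P k) := by
  induction k with
  | zero =>
    constructor
    · intro w w' m hw; simp [stateAt, initState] at hw
    · intro m w h; simp [stateAt, initState, mrank] at h
  | succ k ih =>
    rw [stateAt, Function.iterate_succ_apply']
    exact inv_step P ih

end Profile
namespace Profile

variable {n : ℕ} (P : Profile n)

lemma exists_held_of_not_unmatched {s : DAState n} {m : Fin n}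
    (hm : m ∉ unmatched s) : ∃ w, s.held w = some m := by
  rw [mem_unmatched] at hm
  push_neg at hm
  exact hm

lemma sum_next_step (s : DAState n) :
    ∑ m, (step P s).next m = (∑ m, s.next m) + (unmatched s).card := by
  calc ∑ m, (step P s).next m
      = ∑ m, (s.next m + if m ∈ unmatched s then 1 else 0) := by
        apply Finset.sum_congr rfl
        intro m _
        rw [step_next]
        split <;> simp
    _ = (∑ m, s.next m) + ∑ m, (if m ∈ unmatched s then 1 else 0) :=
        Finset.sum_add_distrib
    _ = (∑ m, s.next m) + (unmatched s).card := by
        rw [Finset.sum_ite_mem, Finset.univ_inter, Finset.sum_const, smul_eq_mul, mul_one]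

lemma sum_next_stateAt (k : ℕ) :
    ∑ m, (stateAt P k).next m = ∑ j ∈ Finset.range k, (unmatched (stateAt P j)).card := by
  induction k with
  | zero => simp [stateAt, initState]
  | succ k ih =>
    rw [Finset.sum_range_succ, ← ih, stateAt, Function.iterate_succ_apply']
    exact sum_next_step P (stateAt P k)

lemma card_held_add {s : DAState n} (hI : Inv P s) :
    (Finset.univ.filter fun w => (s.held w).isSome).card + (unmatched s).card = n := by
  have hcard : (Finset.univ.filter fun w => (s.held w).isSome).card
      = (Finset.univ \ unmatched s).card := by
    apply Finset.card_bij (fun w hw => ((s.held w).get (by simpa using (Finset.mem_filter.1 hw).2)))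
    · intro w hw
      have hsome : (s.held w).isSome := by simpa using (Finset.mem_filter.1 hw).2
      rw [Finset.mem_sdiff]
      refine ⟨Finset.mem_univ _, fun hmem => ?_⟩
      exact (mem_unmatched.1 hmem) w (by simp)
    · intro w hw w' hw' heq
      have h1 : s.held w = some ((s.held w).get (by simpa using (Finset.mem_filter.1 hw).2)) := by simp
      have h2 : s.held w' = some ((s.held w').get (by simpa using (Finset.mem_filter.1 hw').2)) := by simp
      exact hI.1 w w' _ h1 (heq ▸ h2)
    · intro m hm
      rw [Finset.mem_sdiff] at hm
      obtain ⟨w, hw⟩ := exists_held_of_not_unmatched hm.2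
      refine ⟨w, Finset.mem_filter.2 ⟨Finset.mem_univ _, by simp [hw]⟩, ?_⟩
      simp [hw]
  rw [hcard, Finset.card_sdiff_add_card_eq_card (Finset.subset_univ _), Finset.card_univ,
    Fintype.card_fin]

lemma card_unmatched_step_le {s : DAState n} (hI : Inv P s) :
    (unmatched (step P s)).card ≤ (unmatched s).card := by
  have hI' := inv_step P hI
  set f : Fin n → Fin n := fun m =>
    if hm : m ∈ unmatched s then m
    else ((step P s).held (exists_held_of_not_unmatched hm).choose).getD m with hfdef
  have hfpos : ∀ m ∈ unmatched s, f m = m := fun m hm => by simp [hfdef, dif_pos hm]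
  have hf : ∀ m, (hm : m ∉ unmatched s) → s.held (exists_held_of_not_unmatched hm).choose = some m ∧
      (step P s).held (exists_held_of_not_unmatched hm).choose = some (f m) := by
    intro m hm
    have hspec := (exists_held_of_not_unmatched hm).choose_spec
    obtain ⟨m', hm'⟩ := held_step_isSome P (Or.inr ⟨m, hspec⟩)
    refine ⟨hspec, ?_⟩
    rw [hm']
    simp [hfdef, dif_neg hm, hm']
  apply Finset.card_le_card_of_injOn f
  · -- maps unmatched (step P s) into unmatched s
    intro m hm
    by_cases hms : m ∈ unmatched s
    · rwa [hfpos m hms]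
    · obtain ⟨hheld, hheld'⟩ := hf m hms
      rcases held_step_mem P hheld' with hp | hp
      · exact ((mem_proposers P).1 hp).1
      · -- s.held w = some (f m), and s.held w = some m, so f m = m
        have : f m = m := by
          have := hheld.symm.trans hp
          exact (Option.some_inj.1 this).symm
        rw [this] at hheld'
        exact absurd hheld' (mem_unmatched.1 hm _)
  · -- injective on unmatched (step P s)
    intro m1 hm1 m2 hm2 heq
    by_cases h1 : m1 ∈ unmatched s <;> by_cases h2 : m2 ∈ unmatched s
    · rwa [hfpos m1 h1, hfpos m2 h2] at heq
    · exfalso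
      obtain ⟨_, hheld2'⟩ := hf m2 h2
      rw [← heq, hfpos m1 h1] at hheld2'
      have hm1' : m1 ∈ unmatched (step P s) := hm1
      exact (mem_unmatched.1 hm1') _ hheld2'
    · exfalso
      obtain ⟨_, hheld1'⟩ := hf m1 h1
      rw [heq, hfpos m2 h2] at hheld1'
      have hm2' : m2 ∈ unmatched (step P s) := hm2
      exact (mem_unmatched.1 hm2') _ hheld1'
    · obtain ⟨hheld1, hheld1'⟩ := hf m1 h1
      obtain ⟨hheld2, hheld2'⟩ := hf m2 h2
      rw [heq] at hheld1'
      have hww := hI'.1 _ _ _ hheld1' hheld2'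
      rw [hww] at hheld1
      exact Option.some_inj.1 (hheld1.symm.trans hheld2)

end Profile
namespace Profile

variable {n : ℕ} (P : Profile n)

lemma unmatched_init : unmatched (initState n) = (Finset.univ : Finset (Fin n)) := by
  ext m
  simp [unmatched, initState]

lemma stateAt_succ (k : ℕ) : stateAt P (k + 1) = step P (stateAt P k) := by
  rw [stateAt, Function.iterate_succ_apply']
  rfl

lemma u_antitone {j k : ℕ} (h : j ≤ k) :
    (unmatched (stateAt P k)).card ≤ (unmatched (stateAt P j)).card := by
  induction k, h using Nat.le_induction with
  | base => exact le_refl _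
  | succ k hk ih =>
    rw [stateAt_succ]
    exact le_trans (card_unmatched_step_le P (inv_stateAt P k)) ih

lemma rounds_le : P.rounds ≤ n * n + 1 := by
  unfold rounds
  exact le_trans (Finset.card_filter_le _ _) (by rw [Finset.card_range])

lemma mem_rounds_iff {k : ℕ} (hk : k < n * n + 1) :
    (unmatched (stateAt P k)).Nonempty ↔ k < P.rounds := by
  set S := (Finset.range (n * n + 1)).filter
    (fun k => (unmatched (stateAt P k)).Nonempty) with hS
  have hlower : ∀ i j, i ≤ j → j ∈ S → i ∈ S := by
    intro i j hij hj
    rw [hS, Finset.mem_filter, Finset.mem_range] at hj ⊢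
    refine ⟨lt_of_le_of_lt hij hj.1, ?_⟩
    rw [← Finset.card_pos] at hj ⊢
    exact lt_of_lt_of_le hj.2 (u_antitone P hij)
  constructor
  · intro hne
    have hmem : k ∈ S := Finset.mem_filter.2 ⟨Finset.mem_range.2 hk, hne⟩
    have hsub : Finset.range (k + 1) ⊆ S := by
      intro j hj
      rw [Finset.mem_range] at hj
      exact hlower j k (Nat.lt_succ_iff.1 hj) hmem
    have h2 := Finset.card_le_card hsub
    rw [Finset.card_range] at h2
    have hrS : P.rounds = S.card := by rw [hS]; rfl
    omega
  · intro hr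
    by_contra hne
    have hsub : S ⊆ Finset.range k := by
      intro j hj
      rw [Finset.mem_range]
      by_contra hjk
      push_neg at hjk
      have hkS : k ∈ S := hlower k j hjk hj
      exact hne (Finset.mem_filter.1 hkS).2
    have h2 := Finset.card_le_card hsub
    rw [Finset.card_range] at h2
    have hrS : P.rounds = S.card := by rw [hS]; rfl
    omega

lemma target_init (m : Fin n) : target P (initState n) m = P.topM m :=
  congrArg (P.mpref m) (Fin.ext (Nat.zero_mod n))

lemma held_one_iff {w : Fin n} :
    (∃ m, (stateAt P 1).held w = some m) ↔ ∃ m, P.topM m = w := by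
  have h1 : stateAt P 1 = step P (initState n) := stateAt_succ P 0
  constructor
  · rintro ⟨m, hm⟩
    rw [h1] at hm
    rcases held_step_mem P hm with hp | hp
    · rw [mem_proposers] at hp
      exact ⟨m, by rw [← target_init P m]; exact hp.2⟩
    · simp [initState] at hp
  · rintro ⟨m, hm⟩
    rw [h1]
    apply held_step_isSome
    left
    exact ⟨m, (mem_proposers P).2 ⟨by rw [unmatched_init]; exact Finset.mem_univ m,
      by rw [target_init]; exact hm⟩⟩

lemma filter_held_one :
    (Finset.univ.filter fun w => ((stateAt P 1).held w).isSome) =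
      Finset.univ.image P.topM := by
  ext w
  simp only [Finset.mem_filter, Finset.mem_univ, true_and, Finset.mem_image,
    Option.isSome_iff_exists]
  exact (held_one_iff P).trans (by tauto)

lemma exists_free_woman {s : DAState n} (hI : Inv P s)
    (h : (unmatched s).Nonempty) : ∃ w, s.held w = none := by
  have hcard := card_held_add P hI
  have hu : 1 ≤ (unmatched s).card := Finset.card_pos.2 h
  by_contra hno
  push_neg at hno
  have hfu : (Finset.univ.filter fun w => (s.held w).isSome) = Finset.univ := by
    ext w
    simp [Option.isSome_iff_ne_none, hno w]
  rw [hfu, Finset.card_univ, Fintype.card_fin] at hcard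
  omega

lemma next_le_mrank_of_free {s : DAState n} (hI : Inv P s) {w : Fin n}
    (hw : s.held w = none) (m : Fin n) : s.next m ≤ P.mrank m w := by
  by_contra h
  push_neg at h
  obtain ⟨m', hm'⟩ := hI.2 m w h
  rw [hw] at hm'
  cases hm'

end Profile
namespace Profile

variable {n : ℕ} (P : Profile n)

lemma u_zero : (unmatched (stateAt P 0)).card = n := by
  have : stateAt P 0 = initState n := rfl
  rw [this, unmatched_init, Finset.card_univ, Fintype.card_fin]

lemma totalProposals_eq :
    P.totalProposals = ∑ k ∈ Finset.range (n * n + 1), (unmatched (stateAt P k)).card :=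
  sum_next_stateAt P (n * n + 1)

lemma card_image_top_add :
    (Finset.univ.image P.topM).card + (unmatched (stateAt P 1)).card = n := by
  rw [← filter_held_one]
  exact card_held_add P (inv_stateAt P 1)

lemma mrank_topM (m : Fin n) : P.mrank m (P.topM m) = 0 := by
  simp [mrank, topM]

lemma mrank_lt (m w : Fin n) : P.mrank m w < n := ((P.mpref m).symm w).isLt

lemma mrank_injective (m : Fin n) {w w' : Fin n} (h : P.mrank m w = P.mrank m w') :
    w = w' :=
  (P.mpref m).symm.injective (Fin.ext h)

lemma arith1 (n : ℕ) : 2 * n ≤ n * n + 1 := by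
  rcases n with _ | m
  · omega
  · have h : (m + 1) * (m + 1) = m * m + 2 * m + 1 := by ring
    omega

lemma arith2 (n : ℕ) (h : 2 ≤ n) : 3 * n ≤ n * n + 2 := by
  rcases n with _ | _ | m
  · omega
  · omega
  · show 3 * (m + 2) ≤ (m + 2) * (m + 2) + 2
    have h2 : (m + 2) * (m + 2) = m * m + 4 * m + 4 := by ring
    omega

lemma arith3 (n : ℕ) (h : 1 ≤ n) : n * (n - 1) + n = n * n := by
  rcases n with _ | m
  · omega
  · have h1 : (m + 1) * (m + 1) = (m + 1) * m + (m + 1) := by ring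
    simpa using h1.symm

end Profile
namespace Profile

theorem maxRou_char (n : ℕ) (P : Profile n) :
    P.MaxRou ↔
    (P.MaxProp ∧ ∃ wn : Fin n,
      (∀ m w : Fin n, w ≠ wn → P.mPrefers m w wn) ∧
      (∀ w : Fin n, w ≠ wn → ∃ m : Fin n, P.topM m = w)) := by
  constructor
  · intro hR
    have hr : P.rounds = n * n + 2 - 2 * n := hR
    rcases Nat.lt_or_ge n 1 with hn0 | hn1
    · -- n = 0 : contradiction
      exfalso
      have h0 : n = 0 := by omega
      have hr0 : P.rounds = 0 := by
        rw [rounds, Finset.card_eq_zero, Finset.eq_empty_iff_forall_notMem]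
        intro k hk
        rw [Finset.mem_filter] at hk
        obtain ⟨m, -⟩ := hk.2
        exact absurd m.isLt (by omega)
      omega
    rcases Nat.lt_or_ge n 2 with hn1' | hn2
    · -- n = 1
      have h1 : n = 1 := by omega
      have hrle := rounds_le P
      have hr1 : P.rounds = 1 := by
        have hnn : n * n = 1 := by rw [h1]
        omega
      have hMP : P.MaxProp := by
        show P.totalProposals = n * n + 1 - n
        rw [totalProposals_eq, Finset.range_eq_Ico,
          ← Finset.sum_Ico_consecutive _ (by omega : (0:ℕ) ≤ 1) (by omega : 1 ≤ n * n + 1)]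
        have h01 : Finset.Ico (0:ℕ) 1 = {0} := by ext x; simp
        rw [h01, Finset.sum_singleton, u_zero]
        have htail : ∑ k ∈ Finset.Ico 1 (n * n + 1), (unmatched (P.stateAt k)).card = 0 := by
          apply Finset.sum_eq_zero
          intro k hk
          have hk' := Finset.mem_Ico.1 hk
          rw [Finset.card_eq_zero, ← Finset.not_nonempty_iff_eq_empty]
          intro hne
          have := (mem_rounds_iff P (by omega)).1 hne
          omega
        rw [htail]
        omega
      refine ⟨hMP, ⟨0, by omega⟩, ?_, ?_⟩
      · intro m w hw
        exfalso
        apply hw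
        have : w.val = 0 := by omega
        exact Fin.ext this
      · intro w hw
        exfalso
        apply hw
        have : w.val = 0 := by omega
        exact Fin.ext this
    · -- main case n ≥ 2
      have hqn : n ≤ n * n := Nat.le_mul_of_pos_left n (by omega)
      have h2q : 2 * n ≤ n * n := Nat.mul_le_mul_right n hn2
      have h3q : 3 * n ≤ n * n + 2 := arith2 n hn2
      have hmulq : n * (n - 1) + n = n * n := arith3 n (by omega)
      have hrN := rounds_le P
      have hr2 : 2 ≤ P.rounds := by omega
      have hu0 := u_zero P
      have hT := totalProposals_eq P
      have hupos : ∀ k, k < P.rounds → 1 ≤ (unmatched (P.stateAt k)).card := fun k hk =>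
        Finset.card_pos.2 ((mem_rounds_iff P (by omega)).2 hk)
      have hzero : ∀ k, P.rounds ≤ k → k < n * n + 1 → (unmatched (P.stateAt k)).card = 0 := by
        intro k h1 h2
        rw [Finset.card_eq_zero, ← Finset.not_nonempty_iff_eq_empty]
        intro hne
        have := (mem_rounds_iff P (by omega)).1 hne
        omega
      -- free woman at round r-1
      have hI := inv_stateAt P (P.rounds - 1)
      have hne : (unmatched (P.stateAt (P.rounds - 1))).Nonempty :=
        (mem_rounds_iff P (by omega)).2 (by omega)
      obtain ⟨w0, hw0⟩ := exists_free_woman P hI hne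
      have hnextle : ∀ m, (P.stateAt (P.rounds - 1)).next m ≤ P.mrank m w0 :=
        next_le_mrank_of_free P hI hw0
      have hsumnext := sum_next_stateAt P (P.rounds - 1)
      have hranklt : ∀ m : Fin n, P.mrank m w0 ≤ n - 1 := fun m => by
        have := mrank_lt P m w0; omega
      have hsum_rank_le : ∑ m : Fin n, P.mrank m w0 ≤ n * (n - 1) := by
        calc ∑ m : Fin n, P.mrank m w0 ≤ ∑ _m : Fin n, (n - 1) :=
              Finset.sum_le_sum (fun m _ => hranklt m)
          _ = n * (n - 1) := by
              rw [Finset.sum_const, Finset.card_univ, Fintype.card_fin, smul_eq_mul]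
      have hsum_le : ∑ k ∈ Finset.range (P.rounds - 1), (unmatched (P.stateAt k)).card
          ≤ ∑ m : Fin n, P.mrank m w0 := by
        rw [← hsumnext]
        exact Finset.sum_le_sum (fun m _ => hnextle m)
      have hico0 : ∑ k ∈ Finset.Ico P.rounds (n * n + 1), (unmatched (P.stateAt k)).card = 0 :=
        Finset.sum_eq_zero fun k hk =>
          hzero k (Finset.mem_Ico.1 hk).1 (Finset.mem_Ico.1 hk).2
      have hsing : Finset.Ico (P.rounds - 1) P.rounds = {P.rounds - 1} := by
        ext x
        simp only [Finset.mem_Ico, Finset.mem_singleton]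
        omega
      have hsplit : P.totalProposals =
          (∑ k ∈ Finset.range (P.rounds - 1), (unmatched (P.stateAt k)).card)
            + (unmatched (P.stateAt (P.rounds - 1))).card := by
        rw [hT, Finset.range_eq_Ico,
          ← Finset.sum_Ico_consecutive _ (Nat.zero_le (P.rounds - 1)) (by omega : P.rounds - 1 ≤ n * n + 1),
          ← Finset.sum_Ico_consecutive _ (by omega : P.rounds - 1 ≤ P.rounds) (by omega : P.rounds ≤ n * n + 1),
          hico0, hsing, Finset.sum_singleton]
        rw [← Finset.range_eq_Ico]
        omega
      have hrange_r : ∑ k ∈ Finset.range P.rounds, (unmatched (P.stateAt k)).card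
          = (unmatched (P.stateAt 0)).card
            + ∑ k ∈ Finset.Ico 1 P.rounds, (unmatched (P.stateAt k)).card := by
        rw [Finset.range_eq_Ico,
          ← Finset.sum_Ico_consecutive _ (by omega : (0:ℕ) ≤ 1) (by omega : 1 ≤ P.rounds)]
        have h01 : Finset.Ico (0:ℕ) 1 = {0} := by ext x; simp
        rw [h01, Finset.sum_singleton]
      have hsub : ∑ k ∈ Finset.range P.rounds, (unmatched (P.stateAt k)).card
          ≤ ∑ k ∈ Finset.range (n * n + 1), (unmatched (P.stateAt k)).card :=
        Finset.sum_le_sum_of_subset (Finset.range_subset_range.2 (by omega : P.rounds ≤ n * n + 1))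
      have hIco1r : (P.rounds - 1) ≤ ∑ k ∈ Finset.Ico 1 P.rounds, (unmatched (P.stateAt k)).card := by
        calc P.rounds - 1 = ∑ _k ∈ Finset.Ico 1 P.rounds, 1 := by
              rw [Finset.sum_const, Nat.card_Ico, smul_eq_mul, mul_one]
          _ ≤ _ := Finset.sum_le_sum fun k hk => hupos k (Finset.mem_Ico.1 hk).2
      have hTlow : n + (P.rounds - 1) ≤ P.totalProposals := by
        rw [hT]
        omega
      have hcit := card_image_top_add P
      have himgpos : 1 ≤ (Finset.univ.image P.topM).card :=
        Finset.card_pos.2 ⟨P.topM ⟨0, by omega⟩,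
          Finset.mem_image_of_mem _ (Finset.mem_univ _)⟩
      have hur1 : (unmatched (P.stateAt (P.rounds - 1))).card = 1 := by
        by_contra hne2
        have h2le : 2 ≤ (unmatched (P.stateAt (P.rounds - 1))).card := by
          have := hupos (P.rounds - 1) (by omega)
          omega
        have hIco2 : 2 * (P.rounds - 1)
            ≤ ∑ k ∈ Finset.Ico 1 P.rounds, (unmatched (P.stateAt k)).card := by
          calc 2 * (P.rounds - 1) = ∑ _k ∈ Finset.Ico 1 P.rounds, 2 := by
                rw [Finset.sum_const, Nat.card_Ico, smul_eq_mul, mul_comm]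
            _ ≤ _ := Finset.sum_le_sum fun k hk => by
                have hk' := Finset.mem_Ico.1 hk
                have hmono : (unmatched (P.stateAt (P.rounds - 1))).card
                    ≤ (unmatched (P.stateAt k)).card := u_antitone P (by omega)
                omega
        have hTlow2 : n + 2 * (P.rounds - 1) ≤ P.totalProposals := by
          rw [hT]
          omega
        have hu1r : (unmatched (P.stateAt (P.rounds - 1))).card
            ≤ (unmatched (P.stateAt 1)).card := u_antitone P (by omega)
        omega
      have hT_eq : P.totalProposals = n * n - n + 1 := by omega
      have hsum_eq : ∑ k ∈ Finset.range (P.rounds - 1), (unmatched (P.stateAt k)).card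
          = n * (n - 1) := by omega
      have hMP : P.MaxProp := by
        show P.totalProposals = n * n + 1 - n
        omega
      have hsum_rank_eq : ∑ m : Fin n, P.mrank m w0 = n * (n - 1) := by omega
      have hconst : ∑ m : Fin n, P.mrank m w0 = ∑ _m : Fin n, (n - 1) := by
        rw [hsum_rank_eq, Finset.sum_const, Finset.card_univ, Fintype.card_fin, smul_eq_mul]
      have hmrank : ∀ m : Fin n, P.mrank m w0 = n - 1 := fun m =>
        (Finset.sum_eq_sum_iff_of_le (fun m _ => hranklt m)).1 hconst m (Finset.mem_univ m)
      -- u 1 = 1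
      have hIcoeq : ∑ k ∈ Finset.Ico 1 P.rounds, (unmatched (P.stateAt k)).card
          = P.rounds - 1 := by
        have hfull : P.totalProposals = (unmatched (P.stateAt 0)).card
            + (∑ k ∈ Finset.Ico 1 P.rounds, (unmatched (P.stateAt k)).card)
            + ∑ k ∈ Finset.Ico P.rounds (n * n + 1), (unmatched (P.stateAt k)).card := by
          rw [hT, Finset.range_eq_Ico,
            ← Finset.sum_Ico_consecutive _ (by omega : (0:ℕ) ≤ P.rounds) (by omega : P.rounds ≤ n * n + 1),
            ← Finset.sum_Ico_consecutive _ (by omega : (0:ℕ) ≤ 1) (by omega : 1 ≤ P.rounds)]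
          have h01 : Finset.Ico (0:ℕ) 1 = {0} := by ext x; simp
          rw [h01, Finset.sum_singleton]
        omega
      have hall1 : ∀ k ∈ Finset.Ico 1 P.rounds, (1:ℕ) = (unmatched (P.stateAt k)).card := by
        rw [← Finset.sum_eq_sum_iff_of_le (fun k hk => hupos k (Finset.mem_Ico.1 hk).2)]
        rw [Finset.sum_const, Nat.card_Ico, smul_eq_mul, mul_one, hIcoeq]
      have hu1 : (unmatched (P.stateAt 1)).card = 1 :=
        (hall1 1 (Finset.mem_Ico.2 ⟨le_refl 1, by omega⟩)).symm
      refine ⟨hMP, w0, ?_, ?_⟩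
      · intro m w hw
        show P.mrank m w < P.mrank m w0
        have h1 := mrank_lt P m w
        have h2 : P.mrank m w ≠ n - 1 := fun h =>
          hw (mrank_injective P m (h.trans (hmrank m).symm))
        rw [hmrank m]
        omega
      · intro w hw
        have hsubt : Finset.univ.image P.topM ⊆ Finset.univ.erase w0 := by
          intro x hx
          obtain ⟨m, -, hm⟩ := Finset.mem_image.1 hx
          rw [Finset.mem_erase]
          refine ⟨?_, Finset.mem_univ _⟩
          intro hxw0
          have h0 := mrank_topM P m
          rw [hm, hxw0, hmrank m] at h0
          omega
        have hcards : (Finset.univ.erase w0).card ≤ (Finset.univ.image P.topM).card := by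
          rw [Finset.card_erase_of_mem (Finset.mem_univ _), Finset.card_univ, Fintype.card_fin]
          omega
        have heq := Finset.eq_of_subset_of_card_le hsubt hcards
        have hwmem : w ∈ Finset.univ.erase w0 := Finset.mem_erase.2 ⟨hw, Finset.mem_univ _⟩
        rw [← heq] at hwmem
        obtain ⟨m, -, hm⟩ := Finset.mem_image.1 hwmem
        exact ⟨m, hm⟩
  · rintro ⟨hMP, wn, hlast, htop⟩
    have hMP' : P.totalProposals = n * n + 1 - n := hMP
    have hn1 : 1 ≤ n := by
      have := wn.isLt
      omega
    have hqn : n ≤ n * n := Nat.le_mul_of_pos_left n (by omega)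
    have h2q1 : 2 * n ≤ n * n + 1 := arith1 n
    have hrN := rounds_le P
    have hu0 := u_zero P
    have hT := totalProposals_eq P
    -- image of topM covers everything but possibly wn
    have hsubt : Finset.univ.erase wn ⊆ Finset.univ.image P.topM := by
      intro w hw
      obtain ⟨m, hm⟩ := htop w (Finset.mem_erase.1 hw).1
      exact Finset.mem_image.2 ⟨m, Finset.mem_univ _, hm⟩
    have himg : n - 1 ≤ (Finset.univ.image P.topM).card := by
      have h := Finset.card_le_card hsubt
      rwa [Finset.card_erase_of_mem (Finset.mem_univ _), Finset.card_univ,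
        Fintype.card_fin] at h
    have hcit := card_image_top_add P
    have hu1 : (unmatched (P.stateAt 1)).card ≤ 1 := by omega
    have hr1 : 1 ≤ P.rounds := by
      have hne : (unmatched (P.stateAt 0)).Nonempty := Finset.card_pos.1 (by omega)
      exact (mem_rounds_iff P (by omega)).1 hne
    have hukk : ∀ k, 1 ≤ k → k < n * n + 1 →
        (unmatched (P.stateAt k)).card = if k < P.rounds then 1 else 0 := by
      intro k h1 hk
      by_cases hkr : k < P.rounds
      · rw [if_pos hkr]
        have hge : 1 ≤ (unmatched (P.stateAt k)).card :=
          Finset.card_pos.2 ((mem_rounds_iff P hk).2 hkr)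
        have hle : (unmatched (P.stateAt k)).card ≤ (unmatched (P.stateAt 1)).card :=
          u_antitone P h1
        omega
      · rw [if_neg hkr, Finset.card_eq_zero, ← Finset.not_nonempty_iff_eq_empty]
        intro hne
        exact hkr ((mem_rounds_iff P hk).1 hne)
    have hsplitT : P.totalProposals = (unmatched (P.stateAt 0)).card
        + ∑ k ∈ Finset.Ico 1 (n * n + 1), (unmatched (P.stateAt k)).card := by
      rw [hT, Finset.range_eq_Ico,
        ← Finset.sum_Ico_consecutive _ (by omega : (0:ℕ) ≤ 1) (by omega : 1 ≤ n * n + 1)]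
      have h01 : Finset.Ico (0:ℕ) 1 = {0} := by ext x; simp
      rw [h01, Finset.sum_singleton]
    have hIcoT : ∑ k ∈ Finset.Ico 1 (n * n + 1), (unmatched (P.stateAt k)).card
        = P.rounds - 1 := by
      have hcongr : ∑ k ∈ Finset.Ico 1 (n * n + 1), (unmatched (P.stateAt k)).card
          = ∑ k ∈ Finset.Ico 1 (n * n + 1), (if k < P.rounds then 1 else 0) := by
        apply Finset.sum_congr rfl
        intro k hk
        have hk' := Finset.mem_Ico.1 hk
        exact hukk k hk'.1 hk'.2
      rw [hcongr, Finset.sum_boole, Nat.cast_id]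
      have hfilter : (Finset.Ico 1 (n * n + 1)).filter (fun k => k < P.rounds)
          = Finset.Ico 1 P.rounds := by
        ext x
        simp only [Finset.mem_filter, Finset.mem_Ico]
        omega
      rw [hfilter, Nat.card_Ico]
    show P.rounds = n * n + 2 - 2 * n
    omega

end Profile


/-- Characterization of MaxRou: a profile satisfies MaxRou iff it satisfies
MaxProp with a woman `wn` who is every man's least preferred woman, and every
other woman is the top preference of some man. -/
theorem maxRou_characterization (n : ℕ) (P : Profile n) :
    P.MaxRou ↔
    (P.MaxProp ∧ ∃ wn : Fin n,
      (∀ m w : Fin n, w ≠ wn → P.mPrefers m w wn) ∧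
      (∀ w : Fin n, w ≠ wn → ∃ m : Fin n, P.topM m = w)) :=
  Profile.maxRou_char n P
end
end

section
/- For n >= 3, no preference profile satisfies both SPC and MaxProp. -/
open scoped Classical

noncomputable section

namespace SPCAux

open Profile

variable {n : ℕ} (P : Profile n)

lemma mem_unmatched {s : DAState n} {m : Fin n} :
    m ∈ unmatched s ↔ ∀ w, s.held w ≠ some m := by
  simp [unmatched]

lemma stateAt_succ (k : ℕ) : stateAt P (k + 1) = step P (stateAt P k) := by
  simp [stateAt, Function.iterate_succ_apply']

lemma stateAt_zero : stateAt P 0 = initState n := rfl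

lemma wrank_inj {w m m' : Fin n} (h : P.wrank w m = P.wrank w m') : m = m' := by
  have := Fin.val_injective h
  exact (P.wpref w).symm.injective this

lemma next_step (s : DAState n) (m : Fin n) :
    (step P s).next m = if m ∈ unmatched s then s.next m + 1 else s.next m := rfl

/-- if the union set at `w` contains `m'`, then after the step `w` holds
some man at least as good as `m'`. -/
lemma step_held_some {s : DAState n} {w m' : Fin n}
    (h : m' ∈ proposers P s w ∪ (s.held w).toFinset) :
    ∃ m, (step P s).held w = some m ∧ P.wrank w m ≤ P.wrank w m' := by
  have hl : m' ∈ (proposers P s w ∪ (s.held w).toFinset).toList := by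
    rwa [Finset.mem_toList]
  have hne : ((proposers P s w ∪ (s.held w).toFinset).toList).argmin (P.wrank w) ≠ none := by
    intro h0
    rw [List.argmin_eq_none] at h0
    rw [h0] at hl; exact (List.not_mem_nil hl)
  obtain ⟨m, hm⟩ := Option.ne_none_iff_exists'.mp hne
  refine ⟨m, hm, ?_⟩
  exact List.le_of_mem_argmin hl hm

lemma held_step_cases {s : DAState n} {w m : Fin n} (h : (step P s).held w = some m) :
    m ∈ proposers P s w ∨ s.held w = some m := by
  have hmem : m ∈ (proposers P s w ∪ (s.held w).toFinset).toList :=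
    List.argmin_mem h
  rw [Finset.mem_toList, Finset.mem_union] at hmem
  rcases hmem with h1 | h2
  · exact Or.inl h1
  · right; rwa [Option.mem_toFinset, Option.mem_def] at h2

lemma held_step_ne_none {s : DAState n} {w : Fin n} (h : s.held w ≠ none) :
    (step P s).held w ≠ none := by
  obtain ⟨m', hm'⟩ := Option.ne_none_iff_exists'.mp h
  have : m' ∈ proposers P s w ∪ (s.held w).toFinset := by
    rw [Finset.mem_union, Option.mem_toFinset]
    exact Or.inr hm'
  obtain ⟨m, hm, -⟩ := step_held_some P this
  rw [hm]; simp

/-- invariant of the DA dynamics -/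
def Inv (P : Profile n) (s : DAState n) : Prop :=
  (∀ w w' m, s.held w = some m → s.held w' = some m → w = w') ∧
  (∀ m : Fin n, ∀ i : ℕ, (hi : i < n) → i < s.next m → s.held (P.mpref m ⟨i, hi⟩) ≠ none) ∧
  (∀ m : Fin n, s.next m ≤ n)

lemma matched_of_next_eq {s : DAState n} (hInv : Inv P s) {m : Fin n}
    (hm : s.next m = n) : m ∉ unmatched s := by
  have hall : ∀ w : Fin n, s.held w ≠ none := by
    intro w
    have hi : (((P.mpref m).symm w : ℕ)) < n := ((P.mpref m).symm w).isLt
    have := hInv.2.1 m ((P.mpref m).symm w) hi (by rw [hm]; exact hi)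
    simpa using this
  classical
  set g : Fin n → Fin n := fun w => ((s.held w).get (by
    have := hall w
    cases hw : s.held w with
    | none => exact absurd hw this
    | some a => simp [hw])) with hg
  have hgspec : ∀ w, s.held w = some (g w) := by
    intro w
    simp [hg, Option.eq_some_iff_get_eq]
  have hginj : Function.Injective g := by
    intro w w' hww
    exact hInv.1 w w' (g w) (hgspec w) (by rw [hww]; exact hgspec w')
  have hgsurj : Function.Surjective g := Finite.surjective_of_injective hginj
  obtain ⟨w, hw⟩ := hgsurj m
  intro hmem
  exact (mem_unmatched.mp hmem) w (by rw [hgspec w, hw])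

lemma inv_step {s : DAState n} (hInv : Inv P s) : Inv P (step P s) := by
  obtain ⟨ha, hb, hc⟩ := hInv
  refine ⟨?_, ?_, ?_⟩
  · intro w w' m hw hw'
    rcases held_step_cases P hw with h1 | h1 <;> rcases held_step_cases P hw' with h2 | h2
    · have e1 := (Finset.mem_filter.mp h1).2
      have e2 := (Finset.mem_filter.mp h2).2
      rw [← e1, ← e2]
    · exact absurd h2 (mem_unmatched.mp (Finset.mem_filter.mp h1).1 w')
    · exact absurd h1 (mem_unmatched.mp (Finset.mem_filter.mp h2).1 w)
    · exact ha w w' m h1 h2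
  · intro m i hi hlt
    rw [next_step] at hlt
    by_cases hum : m ∈ unmatched s
    · rw [if_pos hum] at hlt
      rcases Nat.lt_succ_iff_lt_or_eq.mp hlt with h1 | h1
      · exact held_step_ne_none P (hb m i hi h1)
      · -- m proposes to mpref m i this round
        have htar : target P s m = P.mpref m ⟨i, hi⟩ := by
          unfold target
          congr 1
          exact Fin.ext (by simp [← h1, Nat.mod_eq_of_lt hi])
        have hprop : m ∈ proposers P s (P.mpref m ⟨i, hi⟩) := by
          rw [proposers, Finset.mem_filter]
          exact ⟨hum, htar⟩
        obtain ⟨m', hm', -⟩ := step_held_some P (w := P.mpref m ⟨i, hi⟩)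
          (Finset.mem_union.mpr (Or.inl hprop))
        rw [hm']; simp
    · rw [if_neg hum] at hlt
      exact held_step_ne_none P (hb m i hi hlt)
  · intro m
    rw [next_step]
    by_cases hum : m ∈ unmatched s
    · rw [if_pos hum]
      rcases Nat.lt_or_ge (s.next m) n with h | h
      · omega
      · have : s.next m = n := le_antisymm (hc m) h
        exact absurd hum (matched_of_next_eq P ⟨ha, hb, hc⟩ this)
    · rw [if_neg hum]; exact hc m

lemma inv_stateAt (k : ℕ) : Inv P (stateAt P k) := by
  induction k with
  | zero =>
    refine ⟨fun w w' m hw _ => ?_, fun m i hi h => ?_, fun m => ?_⟩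
    · exact absurd hw (by simp [stateAt_zero, initState])
    · exact absurd h (by simp [stateAt_zero, initState])
    · simp [stateAt_zero, initState]
  | succ k ih =>
    rw [stateAt_succ]
    exact inv_step P ih

lemma exists_jump {f : ℕ → ℕ} (h0 : f 0 = 0)
    (hstep : ∀ k, f (k + 1) = f k ∨ f (k + 1) = f k + 1) :
    ∀ K r, r < f K → ∃ j < K, f j = r ∧ f (j + 1) = r + 1 := by
  intro K
  induction K with
  | zero => intro r hr; omega
  | succ K ih =>
    intro r hr
    rcases Nat.lt_or_ge r (f K) with h | h
    · obtain ⟨j, hj, h1, h2⟩ := ih r h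
      exact ⟨j, by omega, h1, h2⟩
    · rcases hstep K with h1 | h1 <;> [omega; exact ⟨K, by omega, by omega, by omega⟩]

lemma target_eq {s : DAState n} {m w : Fin n} (h : P.mrank m w = s.next m % n) :
    target P s m = w := by
  unfold target
  have h2 : (⟨s.next m % n, Nat.mod_lt _ m.pos⟩ : Fin n) = (P.mpref m).symm w :=
    Fin.ext (by simpa [mrank] using h.symm)
  rw [h2, Equiv.apply_symm_apply]

end SPCAux

/-- For `n ≥ 3`, no profile satisfies both SPC and MaxProp. -/
theorem spc_maxProp_disjoint (n : ℕ) (hn : 3 ≤ n) (P : Profile n) :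
    ¬ (P.SPC ∧ P.MaxProp) := by
  rintro ⟨⟨σ, τ, hspc⟩, hmax⟩
  have h0n : (0 : ℕ) < n := by omega
  have h1n : (1 : ℕ) < n := by omega
  set i0 : Fin n := ⟨0, h0n⟩ with hi0
  set i1 : Fin n := ⟨1, h1n⟩ with hi1
  have h01 : i0 < i1 := by simp [hi0, hi1, Fin.lt_def]
  have hi01 : i0 ≠ i1 := by simp [hi0, hi1, Fin.ext_iff]
  have hm01 : σ i0 ≠ σ i1 := fun h => hi01 (σ.injective h)
  have hw01 : τ i0 ≠ τ i1 := fun h => hi01 (τ.injective h)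
  -- F0 : σ i0's top choice is τ i0
  have F0 : P.mrank (σ i0) (τ i0) = 0 := by
    by_contra hne0
    have hx0 : P.mrank (σ i0) (P.mpref (σ i0) ⟨0, h0n⟩) = 0 := by simp [Profile.mrank]
    have hxj : τ (τ.symm (P.mpref (σ i0) ⟨0, h0n⟩)) = P.mpref (σ i0) ⟨0, h0n⟩ :=
      τ.apply_symm_apply _
    have hji : i0 < τ.symm (P.mpref (σ i0) ⟨0, h0n⟩) := by
      rw [Fin.lt_def]
      have hne : τ.symm (P.mpref (σ i0) ⟨0, h0n⟩) ≠ i0 := by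
        intro he
        rw [he] at hxj
        rw [hxj] at hne0
        exact hne0 hx0
      have : (τ.symm (P.mpref (σ i0) ⟨0, h0n⟩)).val ≠ 0 := fun h =>
        hne (Fin.ext (h.trans rfl))
      exact Nat.pos_of_ne_zero this
    have := (hspc i0 _ hji).1
    rw [Profile.mPrefers, hxj, hx0] at this
    omega
  -- F1 : τ i0's top choice is σ i0
  have F1 : P.wrank (τ i0) (σ i0) = 0 := by
    by_contra hne0
    have hx0 : P.wrank (τ i0) (P.wpref (τ i0) ⟨0, h0n⟩) = 0 := by simp [Profile.wrank]
    have hxj : σ (σ.symm (P.wpref (τ i0) ⟨0, h0n⟩)) = P.wpref (τ i0) ⟨0, h0n⟩ :=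
      σ.apply_symm_apply _
    have hji : i0 < σ.symm (P.wpref (τ i0) ⟨0, h0n⟩) := by
      rw [Fin.lt_def]
      have hne : σ.symm (P.wpref (τ i0) ⟨0, h0n⟩) ≠ i0 := by
        intro he
        rw [he] at hxj
        rw [hxj] at hne0
        exact hne0 hx0
      have : (σ.symm (P.wpref (τ i0) ⟨0, h0n⟩)).val ≠ 0 := fun h =>
        hne (Fin.ext (h.trans rfl))
      exact Nat.pos_of_ne_zero this
    have := (hspc i0 _ hji).2
    rw [Profile.wPrefers, hxj, hx0] at this
    omega
  -- F2 : τ i1 is among σ i1's top two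
  have F2 : P.mrank (σ i1) (τ i1) ≤ 1 := by
    by_contra hgt
    push_neg at hgt
    have key : ∀ i : ℕ, (hi : i < n) → i ≤ 1 → P.mpref (σ i1) ⟨i, hi⟩ = τ i0 := by
      intro i hi hile
      have hxr : P.mrank (σ i1) (P.mpref (σ i1) ⟨i, hi⟩) = i := by simp [Profile.mrank]
      have hxj : τ (τ.symm (P.mpref (σ i1) ⟨i, hi⟩)) = P.mpref (σ i1) ⟨i, hi⟩ :=
        τ.apply_symm_apply _
      have hnlt : ¬ i1 < τ.symm (P.mpref (σ i1) ⟨i, hi⟩) := by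
        intro hlt
        have := (hspc i1 _ hlt).1
        rw [Profile.mPrefers, hxj, hxr] at this
        omega
      have hjne : (τ.symm (P.mpref (σ i1) ⟨i, hi⟩)).val ≠ 1 := by
        intro he
        have : τ.symm (P.mpref (σ i1) ⟨i, hi⟩) = i1 := Fin.ext (he.trans rfl)
        rw [this] at hxj
        rw [← hxj] at hxr
        omega
      rw [Fin.lt_def] at hnlt
      have hnlt' : ¬ (1 : ℕ) < (τ.symm (P.mpref (σ i1) ⟨i, hi⟩)).val := hnlt
      have hj0 : τ.symm (P.mpref (σ i1) ⟨i, hi⟩) = i0 := by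
        apply Fin.ext
        show _ = (0 : ℕ)
        omega
      rw [← hxj, hj0]
    have heq := (key 0 h0n (by omega)).trans (key 1 h1n (by omega)).symm
    have := (P.mpref (σ i1)).injective heq
    simp [Fin.ext_iff] at this
  -- F3 : only σ i0 and σ i1 can be weakly better than σ i1 for τ i1
  have F3 : ∀ m : Fin n, P.wrank (τ i1) m ≤ P.wrank (τ i1) (σ i1) → m = σ i0 ∨ m = σ i1 := by
    intro m hle
    have hmj : σ (σ.symm m) = m := σ.apply_symm_apply m
    have hnlt : ¬ i1 < σ.symm m := by
      intro hlt
      have := (hspc i1 _ hlt).2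
      rw [Profile.wPrefers, hmj] at this
      omega
    rw [Fin.lt_def] at hnlt
    have hnlt' : ¬ (1 : ℕ) < (σ.symm m).val := hnlt
    rcases (by omega : (σ.symm m).val = 0 ∨ (σ.symm m).val = 1) with h | h
    · left; rw [← hmj, show σ.symm m = i0 from Fin.ext (by show _ = (0:ℕ); omega)]
    · right; rw [← hmj, show σ.symm m = i1 from Fin.ext (by show _ = (1:ℕ); omega)]
  -- τ i0 holds σ i0 from round 1 on
  have key0 : ∀ s : Profile.DAState n,
      σ i0 ∈ Profile.proposers P s (τ i0) ∪ (s.held (τ i0)).toFinset →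
      (Profile.step P s).held (τ i0) = some (σ i0) := by
    intro s hmem
    obtain ⟨m, hm, hle⟩ := SPCAux.step_held_some P hmem
    rw [F1] at hle
    have : P.wrank (τ i0) m = P.wrank (τ i0) (σ i0) := by rw [F1]; omega
    rw [hm, SPCAux.wrank_inj P this]
  have heldw0 : ∀ k : ℕ, (P.stateAt (k + 1)).held (τ i0) = some (σ i0) := by
    intro k
    induction k with
    | zero =>
      rw [SPCAux.stateAt_succ]
      have hum : σ i0 ∈ Profile.unmatched (P.stateAt 0) :=
        SPCAux.mem_unmatched.mpr (by simp [SPCAux.stateAt_zero, Profile.initState])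
      have htar : Profile.target P (P.stateAt 0) (σ i0) = τ i0 :=
        SPCAux.target_eq P (by
          rw [F0, show (P.stateAt 0).next (σ i0) = 0 from rfl, Nat.zero_mod])
      exact key0 _ (Finset.mem_union.mpr (Or.inl (Finset.mem_filter.mpr ⟨hum, htar⟩)))
    | succ k ih =>
      rw [SPCAux.stateAt_succ]
      exact key0 _ (Finset.mem_union.mpr (Or.inr (by rw [Option.mem_toFinset, Option.mem_def]; exact ih)))
  -- σ i0 makes exactly one proposal
  have next_m0 : ∀ k : ℕ, (P.stateAt (k + 1)).next (σ i0) = 1 := by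
    intro k
    induction k with
    | zero =>
      rw [SPCAux.stateAt_succ, SPCAux.next_step, if_pos]
      · rfl
      · exact SPCAux.mem_unmatched.mpr (by simp [SPCAux.stateAt_zero, Profile.initState])
    | succ k ih =>
      rw [SPCAux.stateAt_succ, SPCAux.next_step, if_neg, ih]
      intro hum
      exact SPCAux.mem_unmatched.mp hum (τ i0) (heldw0 k)
  -- MaxProp analysis
  have hsum : ∑ m : Fin n, (P.stateAt (n * n + 1)).next m = n * n + 1 - n := hmax
  have hK1 : (P.stateAt (n * n + 1)).next (σ i0) = 1 := next_m0 (n * n)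
  have hle_n : ∀ m : Fin n, (P.stateAt (n * n + 1)).next m ≤ n :=
    (SPCAux.inv_stateAt P (n * n + 1)).2.2
  have hm1n : (P.stateAt (n * n + 1)).next (σ i1) = n := by
    by_contra h
    have hlt : (P.stateAt (n * n + 1)).next (σ i1) < n := lt_of_le_of_ne (hle_n (σ i1)) h
    have h1 := Finset.sum_erase_add Finset.univ
      (fun m => (P.stateAt (n * n + 1)).next m) (Finset.mem_univ (σ i0))
    have h1' : (∑ m ∈ Finset.univ.erase (σ i0), (P.stateAt (n * n + 1)).next m) +
        (P.stateAt (n * n + 1)).next (σ i0) = ∑ m : Fin n, (P.stateAt (n * n + 1)).next m := h1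
    clear h1
    have h2 : ∑ m ∈ Finset.univ.erase (σ i0), (P.stateAt (n * n + 1)).next m <
        ∑ _m ∈ Finset.univ.erase (σ i0), n :=
      Finset.sum_lt_sum (fun i _ => hle_n i)
        ⟨σ i1, Finset.mem_erase.mpr ⟨fun h' => hm01 h'.symm, Finset.mem_univ _⟩, hlt⟩
    rw [Finset.sum_const, Finset.card_erase_of_mem (Finset.mem_univ _), Finset.card_univ,
      Fintype.card_fin, smul_eq_mul, Nat.sub_mul, one_mul] at h2
    omega
  -- the round where σ i1 proposes to τ i1
  have hstep' : ∀ k : ℕ, (P.stateAt (k + 1)).next (σ i1) = (P.stateAt k).next (σ i1) ∨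
      (P.stateAt (k + 1)).next (σ i1) = (P.stateAt k).next (σ i1) + 1 := by
    intro k
    rw [SPCAux.stateAt_succ, SPCAux.next_step]
    by_cases h : σ i1 ∈ Profile.unmatched (P.stateAt k)
    · right; rw [if_pos h]
    · left; rw [if_neg h]
  obtain ⟨j, hjK, hj1, hj2⟩ := SPCAux.exists_jump (f := fun k => (P.stateAt k).next (σ i1))
    rfl hstep' (n * n + 1) (P.mrank (σ i1) (τ i1))
    (by show _ < (P.stateAt (n * n + 1)).next (σ i1); rw [hm1n]; omega)
  have hj1' : (P.stateAt j).next (σ i1) = P.mrank (σ i1) (τ i1) := hj1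
  have hj2' : (P.stateAt (j + 1)).next (σ i1) = P.mrank (σ i1) (τ i1) + 1 := hj2
  clear hj1 hj2
  have humj : σ i1 ∈ Profile.unmatched (P.stateAt j) := by
    by_contra h
    rw [SPCAux.stateAt_succ, SPCAux.next_step, if_neg h] at hj2'
    omega
  have htarj : Profile.target P (P.stateAt j) (σ i1) = τ i1 :=
    SPCAux.target_eq P (by rw [hj1', Nat.mod_eq_of_lt (by omega)])
  -- τ i1 holds σ i1 from round j+1 on
  have key1 : ∀ k : ℕ,
      σ i1 ∈ Profile.proposers P (P.stateAt k) (τ i1) ∪ ((P.stateAt k).held (τ i1)).toFinset →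
      (P.stateAt (k + 1)).held (τ i1) = some (σ i1) := by
    intro k hmem
    obtain ⟨m, hm, hle⟩ := SPCAux.step_held_some P hmem
    rw [← SPCAux.stateAt_succ] at hm
    rcases F3 m hle with h | h
    · subst h
      have := (SPCAux.inv_stateAt P (k + 1)).1 (τ i1) (τ i0) (σ i0) hm (heldw0 k)
      exact absurd this.symm hw01
    · subst h; exact hm
  have heldw1 : ∀ k : ℕ, j + 1 ≤ k → (P.stateAt k).held (τ i1) = some (σ i1) := by
    intro k hk
    induction k, hk using Nat.le_induction with
    | base => exact key1 j (Finset.mem_union.mpr (Or.inl (Finset.mem_filter.mpr ⟨humj, htarj⟩)))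
    | succ k hk ih =>
      exact key1 k (Finset.mem_union.mpr (Or.inr (by rw [Option.mem_toFinset, Option.mem_def]; exact ih)))
  have frozen : ∀ k : ℕ, j + 1 ≤ k → (P.stateAt k).next (σ i1) = P.mrank (σ i1) (τ i1) + 1 := by
    intro k hk
    induction k, hk using Nat.le_induction with
    | base => exact hj2'
    | succ k hk ih =>
      rw [SPCAux.stateAt_succ, SPCAux.next_step, if_neg, ih]
      intro hum
      exact SPCAux.mem_unmatched.mp hum (τ i1) (heldw1 k hk)
  have hfin := frozen (n * n + 1) (by omega)
  rw [hm1n] at hfin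
  omega
end
end

section
/- For n = 2, every preference profile satisfying m-MaxProp also satisfies SPC, and the inclusion is strict (there is an SPC profile with only 2 proposals in men-proposing DA). -/
open scoped Classical

noncomputable section

namespace MaxPropAux
open Profile

lemma fin2_lt (i j : Fin 2) (h : i < j) : i = 0 ∧ j = 1 := by revert i j; decide

lemma fin2_cover (a b c : Fin 2) (h : a ≠ b) : c = a ∨ c = b := by revert a b c; decide

lemma step_next {n : ℕ} (P : Profile n) (s : Profile.DAState n) (m : Fin n) :
    (Profile.step P s).next m
      = if m ∈ Profile.unmatched s then s.next m + 1 else s.next m := rfl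

lemma step_held {n : ℕ} (P : Profile n) (s : Profile.DAState n) (w : Fin n) :
    (Profile.step P s).held w
      = ((Profile.proposers P s w ∪ (s.held w).toFinset).toList).argmin (P.wrank w) := rfl

lemma daState_ext {n : ℕ} {s t : Profile.DAState n} (h1 : s.next = t.next)
    (h2 : s.held = t.held) : s = t := by
  cases s; cases t; simp_all

lemma mrank_topM (P : Profile 2) (m : Fin 2) : P.mrank m (P.topM m) = 0 := by
  simp [Profile.mrank, Profile.topM]

lemma mrank_pos (P : Profile 2) (m w : Fin 2) (h : w ≠ P.topM m) : 0 < P.mrank m w := by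
  rcases Nat.eq_zero_or_pos (P.mrank m w) with h0 | h0
  · exfalso
    apply h
    have h1 : (P.mpref m).symm w = ⟨0, m.pos⟩ := Fin.ext h0
    have h2 := congrArg (P.mpref m) h1
    simpa [Profile.topM] using h2
  · exact h0

lemma wrank_topW (P : Profile 2) (w : Fin 2) : P.wrank w (P.topW w) = 0 := by
  simp [Profile.wrank, Profile.topW]

lemma wrank_pos (P : Profile 2) (w m : Fin 2) (h : m ≠ P.topW w) : 0 < P.wrank w m := by
  rcases Nat.eq_zero_or_pos (P.wrank w m) with h0 | h0
  · exfalso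
    apply h
    have h1 : (P.wpref w).symm m = ⟨0, w.pos⟩ := Fin.ext h0
    have h2 := congrArg (P.wpref w) h1
    simpa [Profile.topW] using h2
  · exact h0

/-- SPC holds whenever both men share the same top woman. -/
lemma spc_of_shared (P : Profile 2) (h : P.topM 0 = P.topM 1) : P.SPC := by
  set w : Fin 2 := P.topM 0 with hw
  set m : Fin 2 := P.topW w with hm
  have htop : ∀ m' : Fin 2, P.topM m' = w := by
    intro m'
    rcases fin2_cover 0 1 m' (by decide) with rfl | rfl
    · rfl
    · exact h.symm
  refine ⟨Equiv.swap 0 m, Equiv.swap 0 w, fun i j hij => ?_⟩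
  obtain ⟨rfl, rfl⟩ := fin2_lt i j hij
  have hσ0 : Equiv.swap 0 m 0 = m := Equiv.swap_apply_left _ _
  have hτ0 : Equiv.swap 0 w 0 = w := Equiv.swap_apply_left _ _
  have hτ1 : Equiv.swap 0 w 1 ≠ w := by
    rw [← hτ0]
    exact fun hc => absurd ((Equiv.swap 0 w).injective hc) (by decide)
  have hσ1 : Equiv.swap 0 m 1 ≠ m := by
    rw [← hσ0]
    exact fun hc => absurd ((Equiv.swap 0 m).injective hc) (by decide)
  rw [hσ0, hτ0]
  constructor
  · show P.mrank m w < P.mrank m _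
    have h1 : P.mrank m w = 0 := by rw [← htop m]; exact mrank_topM P m
    rw [h1]
    exact mrank_pos P m _ (by rw [htop m]; exact hτ1)
  · show P.wrank w m < P.wrank w _
    rw [wrank_topW P w]
    exact wrank_pos P w _ hσ1

/-- the state after round 1 when the two men have distinct top choices -/
def s1 (P : Profile 2) : Profile.DAState 2 :=
  ⟨fun _ => 1, fun w => if w = P.topM 0 then some 0 else some 1⟩

lemma target_init (P : Profile 2) (m : Fin 2) :
    Profile.target P (Profile.initState 2) m = P.topM m := by
  unfold Profile.target Profile.initState Profile.topM
  congr 1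

lemma unmatched_init : Profile.unmatched (Profile.initState 2) = Finset.univ := by
  ext m
  simp [Profile.unmatched, Profile.initState]

lemma step_init (P : Profile 2) (h : P.topM 0 ≠ P.topM 1) :
    Profile.step P (Profile.initState 2) = s1 P := by
  apply daState_ext
  · funext m
    rw [step_next, unmatched_init]
    simp [s1, Profile.initState]
  · funext w
    have hprop : Profile.proposers P (Profile.initState 2) w
        = Finset.univ.filter (fun m => P.topM m = w) := by
      unfold Profile.proposers
      rw [unmatched_init]
      apply Finset.filter_congr
      intro m _
      rw [target_init]
    have key : ∀ m0 : Fin 2, w = P.topM m0 →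
        Finset.univ.filter (fun m => P.topM m = w) = {m0} := by
      intro m0 hw0
      ext m
      simp only [Finset.mem_filter, Finset.mem_univ, true_and, Finset.mem_singleton]
      constructor
      · intro hm
        rcases fin2_cover 0 1 m (by decide) with rfl | rfl <;>
          rcases fin2_cover 0 1 m0 (by decide) with rfl | rfl
        · rfl
        · exact absurd (hm.trans hw0) h
        · exact absurd (hw0.symm.trans hm.symm) h
        · rfl
      · rintro rfl; exact hw0.symm
    rw [step_held, hprop]
    have hnone : (Profile.initState 2).held w = none := rfl
    rw [hnone]
    rcases fin2_cover (P.topM 0) (P.topM 1) w h with hw | hw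
    · rw [key 0 hw]
      have : (s1 P).held w = some 0 := by simp only [s1]; rw [if_pos hw]
      rw [this]
      simp [Finset.toList_singleton]
    · have hne : ¬ (w = P.topM 0) := by rw [hw]; exact fun hc => h hc.symm
      rw [key 1 hw]
      have : (s1 P).held w = some 1 := by simp only [s1]; rw [if_neg hne]
      rw [this]
      simp [Finset.toList_singleton]

lemma step_s1 (P : Profile 2) (h : P.topM 0 ≠ P.topM 1) :
    Profile.step P (s1 P) = s1 P := by
  have hheld : ∀ m : Fin 2, (s1 P).held (P.topM m) = some m := by
    intro m
    rcases fin2_cover 0 1 m (by decide) with rfl | rfl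
    · simp [s1]
    · have hne : ¬ (P.topM 1 = P.topM 0) := fun hc => h hc.symm
      simp [s1, hne]
  have hunm : Profile.unmatched (s1 P) = ∅ := by
    rw [Finset.eq_empty_iff_forall_notMem]
    intro m hm
    simp only [Profile.unmatched, Finset.mem_filter, Finset.mem_univ, true_and] at hm
    exact hm (P.topM m) (hheld m)
  apply daState_ext
  · funext m
    rw [step_next, hunm]
    simp
  · funext w
    have hw : (s1 P).held w = some (if w = P.topM 0 then (0 : Fin 2) else 1) := by
      simp only [s1]; split <;> rfl
    have hpr : Profile.proposers P (s1 P) w = ∅ := by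
      unfold Profile.proposers
      rw [hunm]
      simp
    rw [step_held, hpr, hw, Finset.empty_union, Option.toFinset_some,
      Finset.toList_singleton, List.argmin_singleton]

lemma total_of_distinct (P : Profile 2) (h : P.topM 0 ≠ P.topM 1) :
    P.totalProposals = 2 := by
  have hfinal : Profile.finalState P = s1 P := by
    show Profile.stateAt P 5 = s1 P
    have h5 : Profile.stateAt P 5
        = (Profile.step P)^[4] (Profile.step P (Profile.initState 2)) := by
      unfold Profile.stateAt
      rw [Function.iterate_succ_apply]
    rw [h5, step_init P h]
    exact Function.iterate_fixed (step_s1 P h) 4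
  unfold Profile.totalProposals
  rw [hfinal]
  simp [s1]

end MaxPropAux

/-- For `n = 2`, m-MaxProp implies SPC, and the inclusion is strict: there is
an SPC profile on which the men-proposing DA makes only 2 proposals. -/
theorem maxProp_subset_spc_two :
    (∀ P : Profile 2, P.MaxProp → P.SPC) ∧
    (∃ P : Profile 2, P.SPC ∧ P.totalProposals = 2) := by
  constructor
  · intro P hP
    by_cases h : P.topM 0 = P.topM 1
    · exact MaxPropAux.spc_of_shared P h
    · exfalso
      have h2 := MaxPropAux.total_of_distinct P h
      unfold Profile.MaxProp at hP
      omega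
  · refine ⟨⟨fun m => Equiv.swap 0 m, fun w => Equiv.swap 0 w⟩, ?_, ?_⟩
    · refine ⟨1, 1, fun i j hij => ?_⟩
      obtain ⟨rfl, rfl⟩ := MaxPropAux.fin2_lt i j hij
      constructor
      · show Profile.mrank _ _ _ < Profile.mrank _ _ _
        decide
      · show Profile.wrank _ _ _ < Profile.wrank _ _ _
        decide
    · apply MaxPropAux.total_of_distinct
      decide
end
end
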